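/- The abelian group ℚ is pure-injective but is not isomorphic to the character group N^+ = Hom_ℤ(N, ℚ/ℤ) of any abelian group N. -/

import Mathlib

/-- The group `ℚ/ℤ`. -/
abbrev RatModInt : Type := ℚ ⧸ AddSubgroup.zmultiples (1 : ℚ)

/-- A morphism of abelian groups is a pure embedding if it is injective and
`f(A) ∩ nB = n·f(A)` for every integer `n`. -/
def IsPureEmbedding {A B : Type} [AddCommGroup A] [AddCommGroup B] (f : A →+ B) : Prop :=
  Function.Injective f ∧
    ∀ (n : ℤ) (a : A), (∃ b : B, f a = n • b) → ∃ a' : A, a = n • a'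

/-- An abelian group `Q` is pure-injective if it is injective with respect to all
pure embeddings. -/
def PureInjective (Q : Type) [AddCommGroup Q] : Prop :=
  ∀ (A B : Type) [AddCommGroup A] [AddCommGroup B] (f : A →+ B), IsPureEmbedding f →
    ∀ g : A →+ Q, ∃ h : B →+ Q, h.comp f = g

/-! ### Auxiliary material -/

namespace AuxRPND

noncomputable instance : DivisibleBy ℚ ℕ := AddGroup.divisibleByNatOfDivisibleByInt ℚ
noncomputable instance : DivisibleBy RatModInt ℕ := QuotientAddGroup.divisibleBy _
noncomputable instance : DivisibleBy RatModInt ℤ :=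
  AddGroup.divisibleByIntOfDivisibleByNat RatModInt

/-- A divisible abelian group is injective: homomorphisms extend along injections. -/
theorem extQ {A B C : Type} [AddCommGroup A] [AddCommGroup B] [AddCommGroup C]
    [DivisibleBy C ℤ] (f : A →+ B) (hf : Function.Injective f) (g : A →+ C) :
    ∃ h : B →+ C, ∀ a, h (f a) = g a := by
  have hinj : Module.Injective ℤ C := (Module.Baer.of_divisible C).injective
  obtain ⟨h, hh⟩ := hinj.out f.toIntLinearMap hf g.toIntLinearMap
  exact ⟨h.toAddMonoidHom, hh⟩

theorem mk_div_ne_zero {c : ℤ} {d : ℕ} (hd : 0 < d) (h : ¬ (d:ℤ) ∣ c) :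
    (((c : ℚ) / (d : ℚ) : ℚ) : RatModInt) ≠ 0 := by
  intro hc
  obtain ⟨k, hk⟩ := AddSubgroup.mem_zmultiples_iff.mp ((QuotientAddGroup.eq_zero_iff _).mp hc)
  apply h
  refine ⟨k, ?_⟩
  have hd' : (d:ℚ) ≠ 0 := Nat.cast_ne_zero.mpr hd.ne'
  have : (c : ℚ) = (d : ℚ) * (k : ℚ) := by
    rw [zsmul_eq_mul, mul_one] at hk
    field_simp at hk
    linarith
  exact_mod_cast this

/-- Every nonzero torsion element admits a character with nonzero value on it. -/
theorem charOfTorsion {M : Type} [AddCommGroup M] {x : M} (hx : x ≠ 0)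
    {n : ℕ} (hn : 0 < n) (hnx : n • x = 0) :
    ∃ χ : M →+ RatModInt, χ x ≠ 0 := by
  have hfin : IsOfFinAddOrder x := isOfFinAddOrder_iff_nsmul_eq_zero.mpr ⟨n, hn, hnx⟩
  set d := addOrderOf x with hd
  have hd0 : 0 < d := hfin.addOrderOf_pos
  have hd1 : d ≠ 1 := by
    intro h
    exact hx (AddMonoid.addOrderOf_eq_one_iff.mp (hd.symm.trans h))
  haveI : NeZero d := ⟨hd0.ne'⟩
  have hzd : (zmultiplesHom M x) (d : ℤ) = 0 := by
    rw [zmultiplesHom_apply, natCast_zsmul]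
    exact addOrderOf_nsmul_eq_zero x
  let ι : ZMod d →+ M := ZMod.lift d ⟨zmultiplesHom M x, hzd⟩
  have hι : Function.Injective ι := by
    rw [injective_iff_map_eq_zero]
    intro z hz
    have hzv : ((z.val : ℤ) : ZMod d) = z := by
      rw [Int.cast_natCast, ZMod.natCast_val, ZMod.cast_id]
    have h0 : z.val • x = 0 := by
      rw [← hzv, ZMod.lift_coe] at hz
      rw [zmultiplesHom_apply, natCast_zsmul] at hz
      exact hz
    have hdvd : d ∣ z.val := addOrderOf_dvd_iff_nsmul_eq_zero.mpr h0
    have hv0 : z.val = 0 := Nat.eq_zero_of_dvd_of_lt hdvd (ZMod.val_lt z)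
    exact (ZMod.val_eq_zero z).mp hv0
  let φ : ℤ →+ RatModInt :=
    (QuotientAddGroup.mk' (AddSubgroup.zmultiples (1 : ℚ))).comp (zmultiplesHom ℚ ((d : ℚ)⁻¹))
  have hφd : φ (d : ℤ) = 0 := by
    have : ((d : ℤ) • ((d : ℚ)⁻¹) : ℚ) = 1 := by
      rw [zsmul_eq_mul]
      push_cast
      field_simp
    show ((((d : ℤ) • ((d : ℚ)⁻¹) : ℚ)) : RatModInt) = 0
    rw [this]
    exact (QuotientAddGroup.eq_zero_iff _).mpr (AddSubgroup.mem_zmultiples 1)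
  let g : ZMod d →+ RatModInt := ZMod.lift d ⟨φ, hφd⟩
  obtain ⟨χ, hχ⟩ := extQ ι hι g
  refine ⟨χ, ?_⟩
  have h1 : ι ((1 : ℤ) : ZMod d) = x := by
    rw [ZMod.lift_coe]
    simp
  have h2 : g ((1 : ℤ) : ZMod d) = (((d : ℚ)⁻¹ : ℚ) : RatModInt) := by
    rw [ZMod.lift_coe]
    show ((((1 : ℤ) • ((d : ℚ)⁻¹) : ℚ)) : RatModInt) = _
    rw [one_smul]
  have h3 := hχ ((1 : ℤ) : ZMod d)
  rw [h1, h2] at h3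
  rw [h3]
  have hnd : ¬ (d : ℤ) ∣ (1 : ℤ) := by
    intro hdd
    have : d ∣ 1 := by exact_mod_cast hdd
    exact hd1 (Nat.dvd_one.mp this)
  have := mk_div_ne_zero hd0 hnd
  simpa using this

/-- A compatible `factorial` chain in an abelian group induces a homomorphism from `ℚ`. -/
theorem homOfChain {M : Type} [AddCommGroup M] (z : ℕ → M)
    (hz : ∀ k, (k + 1) • z (k + 1) = z k) :
    ∃ f : ℚ →+ M, ∀ (q : ℚ) (k : ℕ), q.den ∣ Nat.factorial k →
      f q = (q.num * ((Nat.factorial k / q.den : ℕ) : ℤ)) • z k := by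
  have key : ∀ k j, k ≤ j → z k = (Nat.factorial j / Nat.factorial k : ℕ) • z j := by
    intro k j hkj
    induction j, hkj using Nat.le_induction with
    | base => rw [Nat.div_self (Nat.factorial_pos k), one_smul]
    | succ j hkj ih =>
      have hdvd : Nat.factorial k ∣ Nat.factorial j := Nat.factorial_dvd_factorial hkj
      rw [ih, ← hz j, ← mul_nsmul]
      congr 1
      rw [Nat.factorial_succ, Nat.mul_div_assoc (j+1) hdvd]
  have wd : ∀ (q : ℚ) (k j : ℕ), k ≤ j → q.den ∣ Nat.factorial k →
      (q.num * ((Nat.factorial k / q.den : ℕ) : ℤ)) • z k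
        = (q.num * ((Nat.factorial j / q.den : ℕ) : ℤ)) • z j := by
    intro q k j hkj hdvd
    have hnat : (Nat.factorial k / q.den) * (Nat.factorial j / Nat.factorial k)
        = Nat.factorial j / q.den := by
      obtain ⟨u, hu⟩ := hdvd
      obtain ⟨v, hv⟩ := Nat.factorial_dvd_factorial hkj
      have hden : 0 < q.den := q.pos
      have hku : 0 < q.den * u := by rw [← hu]; exact Nat.factorial_pos k
      rw [hv, hu, Nat.mul_div_cancel_left u hden, Nat.mul_div_cancel_left v hku,
        mul_assoc, Nat.mul_div_cancel_left (u * v) hden]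
    rw [key k j hkj, ← natCast_zsmul (z j) (Nat.factorial j / Nat.factorial k), ← mul_zsmul]
    congr 1
    rw [mul_assoc, ← Nat.cast_mul, hnat]
  have castc : ∀ (q : ℚ) (k : ℕ), q.den ∣ Nat.factorial k →
      ((q.num * ((Nat.factorial k / q.den : ℕ) : ℤ) : ℤ) : ℚ) = q * (Nat.factorial k : ℚ) := by
    intro q k hdvd
    have hden : (q.den : ℚ) ≠ 0 := Nat.cast_ne_zero.mpr q.den_nz
    rw [Int.cast_mul, Int.cast_natCast, Nat.cast_div hdvd hden, ← mul_div_assoc,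
      div_eq_iff hden]
    have hq : q * (q.den : ℚ) = (q.num : ℚ) := ((div_eq_iff hden).mp (Rat.num_div_den q)).symm
    rw [mul_right_comm, hq]
  set F : ℚ → M := fun q => (q.num * ((Nat.factorial q.den / q.den : ℕ) : ℤ)) • z q.den with hF
  have hFwd : ∀ (q : ℚ) (k : ℕ), q.den ∣ Nat.factorial k →
      F q = (q.num * ((Nat.factorial k / q.den : ℕ) : ℤ)) • z k := by
    intro q k hdvd
    have h1 : q.den ∣ Nat.factorial q.den := Nat.dvd_factorial q.pos le_rfl
    rcases le_total q.den k with h | h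
    · exact wd q q.den k h h1
    · exact (wd q k q.den h hdvd).symm
  have hadd : ∀ a b : ℚ, F (a + b) = F a + F b := by
    intro a b
    set k := a.den * b.den * (a + b).den with hk
    have hk0 : 0 < k := Nat.mul_pos (Nat.mul_pos a.pos b.pos) (a+b).pos
    have hfac : ∀ d : ℕ, d ∣ k → d ∣ Nat.factorial k := fun d hd =>
      hd.trans (Nat.dvd_factorial hk0 le_rfl)
    have ha : a.den ∣ Nat.factorial k := hfac _ ⟨b.den * (a + b).den, by rw [hk]; ring⟩
    have hb : b.den ∣ Nat.factorial k := hfac _ ⟨a.den * (a + b).den, by rw [hk]; ring⟩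
    have hab : (a + b).den ∣ Nat.factorial k := hfac _ ⟨a.den * b.den, by rw [hk]; ring⟩
    rw [hFwd a k ha, hFwd b k hb, hFwd (a + b) k hab, ← add_zsmul]
    congr 1
    have : (((a + b).num * ((Nat.factorial k / (a + b).den : ℕ) : ℤ) : ℤ) : ℚ)
        = ((a.num * ((Nat.factorial k / a.den : ℕ) : ℤ)
            + b.num * ((Nat.factorial k / b.den : ℕ) : ℤ) : ℤ) : ℚ) := by
      rw [castc (a + b) k hab, Int.cast_add, castc a k ha, castc b k hb]
      ring
    exact_mod_cast this
  exact ⟨AddMonoidHom.mk' F hadd, fun q k hdvd => hFwd q k hdvd⟩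

/-- Integer sequence attached to a boolean sequence. -/
def cseq (ε : ℕ → Bool) : ℕ → ℤ
  | 0 => 0
  | 1 => 0
  | (j + 2) => cseq ε (j + 1) + (if ε j then ((Nat.factorial (j + 1) : ℕ) : ℤ) else 0)

/-- The associated compatible sequence in `ℚ/ℤ`. -/
noncomputable def aseq (ε : ℕ → Bool) (k : ℕ) : RatModInt :=
  (((cseq ε k : ℚ) / (Nat.factorial k : ℚ) : ℚ) : RatModInt)

theorem cseq_succ_sub (ε : ℕ → Bool) (k : ℕ) :
    ∃ m : ℤ, cseq ε (k + 1) - cseq ε k = m * (Nat.factorial k : ℤ) := by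
  cases k with
  | zero => exact ⟨0, by simp [cseq]⟩
  | succ j =>
    refine ⟨if ε j then 1 else 0, ?_⟩
    show cseq ε (j + 2) - cseq ε (j + 1) = _
    rw [show cseq ε (j + 2)
        = cseq ε (j + 1) + (if ε j then ((Nat.factorial (j + 1) : ℕ) : ℤ) else 0) from rfl]
    by_cases h : ε j <;> simp [h]

theorem aseq_chain (ε : ℕ → Bool) (k : ℕ) : (k + 1) • aseq ε (k + 1) = aseq ε k := by
  obtain ⟨m, hm⟩ := cseq_succ_sub ε k
  have h1 : ((k + 1 : ℕ)) • aseq ε (k + 1)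
      = ((((k + 1 : ℕ) : ℚ) * ((cseq ε (k + 1) : ℚ) / (Nat.factorial (k + 1) : ℚ)) : ℚ)
          : RatModInt) := by
    show ((k + 1 : ℕ)) • (QuotientAddGroup.mk _) = QuotientAddGroup.mk _
    rw [← QuotientAddGroup.mk_nsmul]
    congr 1
  rw [h1]
  unfold aseq
  rw [QuotientAddGroup.eq]
  refine AddSubgroup.mem_zmultiples_iff.mpr ⟨-m, ?_⟩
  rw [zsmul_eq_mul, mul_one]
  have hmc : ((cseq ε (k+1) : ℚ)) - (cseq ε k : ℚ) = (m : ℚ) * (Nat.factorial k : ℚ) := by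
    exact_mod_cast hm
  have hk0 : ((Nat.factorial k : ℚ)) ≠ 0 := Nat.cast_ne_zero.mpr (Nat.factorial_pos k).ne'
  have hf : ((Nat.factorial (k+1) : ℚ)) = ((k:ℚ)+1) * (Nat.factorial k : ℚ) := by
    rw [Nat.factorial_succ]; push_cast; ring
  have hk10 : ((k:ℚ)+1) ≠ 0 := by positivity
  rw [hf]
  push_cast
  field_simp
  linear_combination hmc

theorem aseq_inj {ε ε' : ℕ → Bool} (h : ∀ k, aseq ε k = aseq ε' k) : ε = ε' := by
  by_contra hne
  have hex : ∃ k, ε k ≠ ε' k := by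
    by_contra h'; push_neg at h'; exact hne (funext h')
  classical
  set k := Nat.find hex with hkdef
  have hfk : ε k ≠ ε' k := Nat.find_spec hex
  have hlt : ∀ m, m < k → ε m = ε' m := fun m hm => by
    have := Nat.find_min hex hm; simpa using this
  have hceq : ∀ m, m ≤ k + 1 → cseq ε m = cseq ε' m := by
    intro m hm
    induction m with
    | zero => rfl
    | succ n ih =>
      cases n with
      | zero => rfl
      | succ n' =>
        have h1 : cseq ε (n' + 2)
            = cseq ε (n' + 1) + (if ε n' then ((Nat.factorial (n' + 1) : ℕ) : ℤ) else 0) := rfl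
        have h2 : cseq ε' (n' + 2)
            = cseq ε' (n' + 1) + (if ε' n' then ((Nat.factorial (n' + 1) : ℕ) : ℤ) else 0) := rfl
        rw [h1, h2, ih (by omega), hlt n' (by omega)]
  have hd : cseq ε (k + 2) - cseq ε' (k + 2)
      = (if ε k then ((Nat.factorial (k + 1) : ℕ) : ℤ) else 0)
        - (if ε' k then ((Nat.factorial (k + 1) : ℕ) : ℤ) else 0) := by
    have h1 : cseq ε (k + 2)
        = cseq ε (k + 1) + (if ε k then ((Nat.factorial (k + 1) : ℕ) : ℤ) else 0) := rfl
    have h2 : cseq ε' (k + 2)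
        = cseq ε' (k + 1) + (if ε' k then ((Nat.factorial (k + 1) : ℕ) : ℤ) else 0) := rfl
    rw [h1, h2, hceq (k + 1) le_rfl]
    ring
  have h2 := h (k + 2)
  unfold aseq at h2
  rw [QuotientAddGroup.eq] at h2
  obtain ⟨t, ht⟩ := AddSubgroup.mem_zmultiples_iff.mp h2
  rw [zsmul_eq_mul, mul_one] at ht
  have hfpos : (0:ℚ) < ((Nat.factorial (k + 2) : ℕ) : ℚ) := by
    exact_mod_cast Nat.factorial_pos (k + 2)
  have htQ : (t : ℚ) * ((Nat.factorial (k + 2) : ℕ) : ℚ)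
      = ((cseq ε' (k + 2) : ℚ)) - ((cseq ε (k + 2) : ℚ)) := by
    rw [ht]
    field_simp
    ring
  have htZ : t * ((Nat.factorial (k + 2) : ℕ) : ℤ) = cseq ε' (k + 2) - cseq ε (k + 2) := by
    exact_mod_cast htQ
  have habs : t.natAbs * Nat.factorial (k + 2) = Nat.factorial (k + 1) := by
    have := congrArg Int.natAbs htZ
    rw [Int.natAbs_mul, Int.natAbs_natCast] at this
    rw [this]
    cases hek : ε k <;> cases hek' : ε' k
    · exact absurd (hek.trans hek'.symm) hfk
    · rw [show cseq ε' (k + 2) - cseq ε (k + 2)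
          = -(cseq ε (k + 2) - cseq ε' (k + 2)) by ring, hd, hek, hek']
      simp
    · rw [show cseq ε' (k + 2) - cseq ε (k + 2)
          = -(cseq ε (k + 2) - cseq ε' (k + 2)) by ring, hd, hek, hek']
      simp
    · exact absurd (hek.trans hek'.symm) hfk
  have hApos : 0 < Nat.factorial (k + 1) := Nat.factorial_pos _
  have hfs : Nat.factorial (k + 2) = (k + 2) * Nat.factorial (k + 1) := rfl
  have ht0 : t.natAbs ≠ 0 := by
    intro h0
    rw [h0, zero_mul] at habs
    omega
  have hge : Nat.factorial (k + 2) ≤ t.natAbs * Nat.factorial (k + 2) :=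
    Nat.le_mul_of_pos_left _ (Nat.pos_of_ne_zero ht0)
  have h2A : 2 * Nat.factorial (k + 1) ≤ (k + 2) * Nat.factorial (k + 1) :=
    Nat.mul_le_mul_right _ (by omega)
  rw [habs, hfs] at hge
  linarith

theorem not_countable_bool_seq : ¬ Countable (ℕ → Bool) := by
  intro h
  obtain ⟨f, hf⟩ := exists_injective_nat (ℕ → Bool)
  classical
  let g : Set ℕ → (ℕ → Bool) := fun s n => decide (n ∈ s)
  have hg : Function.Injective g := by
    intro s s' hss
    ext n
    have := congrFun hss n
    simpa [g, decide_eq_decide] using this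
  exact Function.cantor_injective (f ∘ g) (hf.comp hg)

end AuxRPND

/-- `ℚ` is pure-injective but is not isomorphic to the character group
`N⁺ = Hom_ℤ(N, ℚ/ℤ)` of any abelian group `N`. -/
theorem rat_pureInjective_not_dual :
    PureInjective ℚ ∧
      ∀ (N : Type) [AddCommGroup N], IsEmpty (ℚ ≃+ (N →+ RatModInt)) := by
  constructor
  · -- ℚ is divisible, hence injective, hence pure-injective
    intro A B _ _ f hf g
    obtain ⟨h, hh⟩ := AuxRPND.extQ f hf.1 g
    exact ⟨h, AddMonoidHom.ext hh⟩
  · intro N _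
    refine ⟨fun e => ?_⟩
    classical
    -- the dual group is divisible (transported from ℚ)
    have divh : ∀ (χ : N →+ RatModInt) (n : ℤ), n ≠ 0 →
        ∃ ψ : N →+ RatModInt, n • ψ = χ := by
      intro χ n hn
      refine ⟨e ((n : ℚ)⁻¹ * e.symm χ), ?_⟩
      rw [← map_zsmul, zsmul_eq_mul, ← mul_assoc,
        mul_inv_cancel₀ (by exact_mod_cast hn), one_mul, e.apply_symm_apply]
    -- the dual group is torsion-free (transported from ℚ)
    have tfh : ∀ (χ : N →+ RatModInt) (n : ℤ), n ≠ 0 → n • χ = 0 → χ = 0 := by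
      intro χ n hn h0
      have h1 : e (n • e.symm χ) = 0 := by
        rw [map_zsmul, e.apply_symm_apply]; exact h0
      have h2 : n • e.symm χ = 0 := e.injective (h1.trans (map_zero e).symm)
      have h3 : e.symm χ = 0 := by
        rcases smul_eq_zero.mp h2 with h | h
        · exact absurd h hn
        · exact h
      calc χ = e (e.symm χ) := (e.apply_symm_apply χ).symm
        _ = 0 := by rw [h3, map_zero]
    -- N is torsion-free
    have tfN : ∀ (x : N) (n : ℕ), 0 < n → n • x = 0 → x = 0 := by
      intro x n hn hxz
      by_contra hx0
      obtain ⟨χ, hχ⟩ := AuxRPND.charOfTorsion hx0 hn hxz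
      obtain ⟨ψ, hψ⟩ := divh χ (n : ℤ) (by exact_mod_cast hn.ne')
      apply hχ
      rw [← hψ]
      show (n : ℤ) • (ψ x) = 0
      rw [← map_zsmul ψ, natCast_zsmul, hxz, map_zero]
    -- N is divisible
    have divN : ∀ (x : N) (n : ℕ), 0 < n → ∃ y : N, n • y = x := by
      intro x n hn
      by_contra hne
      push_neg at hne
      let K : AddSubgroup N :=
        { carrier := {w | ∃ y : N, n • y = w}
          zero_mem' := ⟨0, smul_zero n⟩
          add_mem' := by rintro a b ⟨y, rfl⟩ ⟨y', rfl⟩; exact ⟨y + y', smul_add n y y'⟩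
          neg_mem' := by rintro a ⟨y, rfl⟩; exact ⟨-y, smul_neg n y⟩ }
      have hmemK : ∀ w : N, w ∈ K ↔ ∃ y : N, n • y = w := fun w => Iff.rfl
      have hxK : ((x : N ⧸ K)) ≠ 0 := by
        intro h0
        obtain ⟨y, hy⟩ := (QuotientAddGroup.eq_zero_iff x).mp h0
        exact hne y hy
      have hnx : n • ((x : N ⧸ K)) = 0 := by
        rw [← QuotientAddGroup.mk_nsmul]
        exact (QuotientAddGroup.eq_zero_iff _).mpr ((hmemK _).mpr ⟨x, rfl⟩)
      obtain ⟨χ', hχ'⟩ := AuxRPND.charOfTorsion hxK hn hnx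
      have hχ0 : χ'.comp (QuotientAddGroup.mk' K) = 0 := by
        apply tfh _ (n : ℤ) (by exact_mod_cast hn.ne')
        ext y
        show (n : ℤ) • (χ' ((y : N ⧸ K))) = 0
        rw [← map_zsmul χ', natCast_zsmul, ← QuotientAddGroup.mk_nsmul,
          (QuotientAddGroup.eq_zero_iff _).mpr ((hmemK _).mpr ⟨y, rfl⟩), map_zero]
      apply hχ'
      have := congrArg (fun F : N →+ RatModInt => F x) hχ0
      simpa using this
    -- N is nonzero
    obtain ⟨x₀, hx₀⟩ : ∃ x : N, e 1 x ≠ 0 := by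
      by_contra h
      push_neg at h
      exact one_ne_zero (e.injective ((AddMonoidHom.ext h).trans (map_zero e).symm))
    have hx0 : x₀ ≠ 0 := fun h => hx₀ (by rw [h, map_zero])
    -- a factorial-compatible chain through x₀
    have hdiv : ∀ (k : ℕ) (w : N), ∃ y, (k + 1) • y = w := fun k w => divN w (k+1) k.succ_pos
    let z : ℕ → N := fun k => Nat.rec x₀ (fun k zk => Classical.choose (hdiv k zk)) k
    have hz : ∀ k, (k + 1) • z (k + 1) = z k := fun k => Classical.choose_spec (hdiv k (z k))
    have hz0 : z 0 = x₀ := rfl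
    -- the induced embedding ℚ →+ N
    obtain ⟨j, hj⟩ := AuxRPND.homOfChain z hz
    have hzzero : ∀ k, z k = 0 → z 0 = 0 := by
      intro k
      induction k with
      | zero => exact id
      | succ k ih => intro h; exact ih (by rw [← hz k, h, smul_zero])
    have hjinj : Function.Injective j := by
      rw [injective_iff_map_eq_zero]
      intro q hq
      by_contra hq0
      have hden : q.den ∣ Nat.factorial q.den := Nat.dvd_factorial q.pos le_rfl
      rw [hj q q.den hden] at hq
      have hfq : 0 < Nat.factorial q.den / q.den :=
        Nat.div_pos (Nat.le_of_dvd (Nat.factorial_pos _) hden) q.pos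
      have hc : q.num * ((Nat.factorial q.den / q.den : ℕ) : ℤ) ≠ 0 :=
        mul_ne_zero (Rat.num_ne_zero.mpr hq0) (by exact_mod_cast hfq.ne')
      have hzq : z q.den = 0 := by
        have h1 : (q.num * ((Nat.factorial q.den / q.den : ℕ) : ℤ)).natAbs • z q.den = 0 := by
          rcases Int.natAbs_eq (q.num * ((Nat.factorial q.den / q.den : ℕ) : ℤ)) with h | h
          · rw [← natCast_zsmul, ← h, hq]
          · rw [← natCast_zsmul, ← neg_eq_iff_eq_neg.mpr h, neg_zsmul, hq, neg_zero]
        exact tfN _ _ (Int.natAbs_pos.mpr hc) h1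
      exact hx0 (hz0 ▸ hzzero q.den hzq)
    -- dualizing: restriction to ℚ is surjective
    have hρ : Function.Surjective (fun χ : N →+ RatModInt => χ.comp j) := by
      intro φ
      obtain ⟨h, hh⟩ := AuxRPND.extQ j hjinj φ
      exact ⟨h, AddMonoidHom.ext hh⟩
    have hcount1 : Countable (N →+ RatModInt) := Countable.of_equiv ℚ e.toEquiv
    have hcount2 : Countable (ℚ →+ RatModInt) := hρ.countable
    -- uncountably many homomorphisms ℚ →+ ℚ/ℤ
    have hG : ∀ ε : ℕ → Bool, ∃ f : ℚ →+ RatModInt,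
        ∀ k, f (((Nat.factorial k : ℕ) : ℚ))⁻¹ = AuxRPND.aseq ε k := by
      intro ε
      obtain ⟨f, hf⟩ := AuxRPND.homOfChain (AuxRPND.aseq ε) (AuxRPND.aseq_chain ε)
      refine ⟨f, fun k => ?_⟩
      have h1 : (((Nat.factorial k : ℕ) : ℚ))⁻¹.den = Nat.factorial k :=
        Rat.inv_natCast_den_of_pos (Nat.factorial_pos k)
      have h2 : (((Nat.factorial k : ℕ) : ℚ))⁻¹.num = 1 :=
        Rat.inv_natCast_num_of_pos (Nat.factorial_pos k)
      rw [hf _ k (by rw [h1]), h1, h2, Nat.div_self (Nat.factorial_pos k)]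
      simp [AuxRPND.aseq]
    choose G hGspec using hG
    have hGinj : Function.Injective G := by
      intro ε ε' hGe
      exact AuxRPND.aseq_inj fun k => by rw [← hGspec ε k, ← hGspec ε' k, hGe]
    exact AuxRPND.not_countable_bool_seq (Function.Injective.countable hGinj)
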